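/- Define f₂ : ℝ → ℝ by f₂(x) = x² for x ≥ −1 and f₂(x) = 4√(−x) − 3 for x < −1, whose unique global minimizer is x⋆ = 0 with minimal value 0. Then for every constant c₂ ≥ 0 there exists x ∈ ℝ such that f₂′(x) · (x − 0) < f₂(x) − c₂; that is, f₂ does not satisfy the inequality ⟨∇f(x), x − x⋆⟩ ≥ f(x) − c₂ (the c₁ = 1 case of the unified parametric assumption with P(x) = f(x) − f⋆) for any finite c₂ ≥ 0. -/
import Mathlib


/-- The function `f₂` (piecewise `x²` for `x ≥ −1` and `4√(−x) − 3` for `x < −1`),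
whose unique global minimizer is `x⋆ = 0` with minimal value `0`, fails the `c₁ = 1`
case of the unified parametric assumption with `P(x) = f(x) − f⋆` for every finite
`c₂ ≥ 0`: there is always a point where `f₂′(x)(x − 0) < f₂(x) − c₂`. -/
theorem f2_fails_c1_eq_one
    (f₂ : ℝ → ℝ)
    (hf₂ : ∀ x : ℝ, f₂ x = if -1 ≤ x then x ^ 2 else 4 * Real.sqrt (-x) - 3)
    (hmin : ∀ x : ℝ, x ≠ 0 → f₂ 0 < f₂ x) (hval : f₂ 0 = 0) :
    ∀ c₂ : ℝ, 0 ≤ c₂ → ∃ x : ℝ, deriv f₂ x * (x - 0) < f₂ x - c₂ := by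
  intro c₂ hc₂
  set a : ℝ := c₂ + 3 with ha_def
  have ha : (3 : ℝ) ≤ a := by linarith
  have ha0 : (0 : ℝ) < a := by linarith
  set x0 : ℝ := -a ^ 2 with hx0_def
  have hx0lt : x0 < -1 := by nlinarith
  have hsq : Real.sqrt (-x0) = a := by
    rw [hx0_def, neg_neg, Real.sqrt_sq ha0.le]
  -- derivative of the sqrt branch at x0
  have hne : -x0 ≠ 0 := by nlinarith
  have hd1 : HasDerivAt (fun x : ℝ => Real.sqrt (-x)) (1 / (2 * Real.sqrt (-x0)) * (-1)) x0 :=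
    (Real.hasDerivAt_sqrt hne).comp x0 (hasDerivAt_neg x0)
  have hd2 : HasDerivAt (fun x : ℝ => 4 * Real.sqrt (-x) - 3)
      (4 * (1 / (2 * Real.sqrt (-x0)) * (-1))) x0 := (hd1.const_mul 4).sub_const 3
  have heq : f₂ =ᶠ[nhds x0] fun x : ℝ => 4 * Real.sqrt (-x) - 3 := by
    filter_upwards [Iio_mem_nhds hx0lt] with x hx
    rw [hf₂ x, if_neg (by exact not_le.mpr hx)]
  have hderiv : deriv f₂ x0 = 4 * (1 / (2 * Real.sqrt (-x0)) * (-1)) := by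
    rw [Filter.EventuallyEq.deriv_eq heq, hd2.deriv]
  refine ⟨x0, ?_⟩
  have hfx0 : f₂ x0 = 4 * a - 3 := by
    rw [hf₂ x0, if_neg (not_le.mpr hx0lt), hsq]
  rw [hderiv, hfx0, hsq]
  have : 4 * (1 / (2 * a) * (-1)) * (x0 - 0) = 2 * a := by
    field_simp [hx0_def]
    ring
  rw [this]
  linarith
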